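/- Let P be an edge-parallelism of the complete graph on an n-element set X (n even) and let g be a non-identity automorphism of P fixing exactly r points with r > 0. Then r ≤ n/2, and g fixes setwise exactly r − 1 of the n − 1 parallel classes of P. -/

import Mathlib

/-- A perfect matching of the `n`-element set `Fin n`: a collection of
2-element subsets such that every point lies in exactly one of them. -/
def IsPerfectMatchingOn (n : ℕ) (M : Finset (Finset (Fin n))) : Prop :=
  (∀ e ∈ M, e.card = 2) ∧ ∀ x : Fin n, ∃! e, e ∈ M ∧ x ∈ e

/-- An edge-parallelism (1-factorisation) of the complete graph on `Fin n`:
a collection of parallel classes, each a perfect matching, such that every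
2-element subset of `Fin n` lies in exactly one class. -/
def IsOneFactorisation (n : ℕ) (P : Finset (Finset (Finset (Fin n)))) : Prop :=
  (∀ M ∈ P, IsPerfectMatchingOn n M) ∧
  ∀ e : Finset (Fin n), e.card = 2 → ∃! M, M ∈ P ∧ e ∈ M

/-- `g` is an automorphism of the edge-parallelism `P`: the image of every
parallel class is a parallel class. -/
def IsOneFactorisationAuto (n : ℕ) (P : Finset (Finset (Finset (Fin n))))
    (g : Equiv.Perm (Fin n)) : Prop :=
  ∀ M ∈ P, M.image (Finset.image g) ∈ P

private lemma pm_edge_unique {n : ℕ} {M : Finset (Finset (Fin n))}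
    (hM : IsPerfectMatchingOn n M) {e f : Finset (Fin n)} {x : Fin n}
    (he : e ∈ M) (hf : f ∈ M) (hxe : x ∈ e) (hxf : x ∈ f) : e = f :=
  (hM.2 x).unique ⟨he, hxe⟩ ⟨hf, hxf⟩

private lemma pm_card {n : ℕ} {M : Finset (Finset (Fin n))}
    (hM : IsPerfectMatchingOn n M) (S : Finset (Fin n))
    (hS : ∀ x ∈ S, ∃ e, e ∈ M ∧ x ∈ e ∧ e ⊆ S) :
    2 * (M.filter (fun e => e ⊆ S)).card = S.card := by
  have hdisj : ∀ e ∈ M.filter (fun e => e ⊆ S), ∀ f ∈ M.filter (fun e => e ⊆ S),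
      e ≠ f → Disjoint (id e) (id f) := by
    intro e he f hf hne
    rw [Finset.disjoint_left]
    intro a hae haf
    exact hne (pm_edge_unique hM (Finset.mem_filter.mp he).1 (Finset.mem_filter.mp hf).1 hae haf)
  have hSeq : S = (M.filter (fun e => e ⊆ S)).biUnion id := by
    ext x
    simp only [Finset.mem_biUnion, Finset.mem_filter, id]
    constructor
    · intro hx
      obtain ⟨e, he, hxe, hes⟩ := hS x hx
      exact ⟨e, ⟨he, hes⟩, hxe⟩
    · rintro ⟨e, ⟨he, hes⟩, hxe⟩
      exact hes hxe
  conv_rhs => rw [hSeq]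
  rw [Finset.card_biUnion hdisj,
    Finset.sum_congr rfl (fun e he => (hM.1 e (Finset.mem_filter.mp he).1 : (id e).card = 2)),
    Finset.sum_const, smul_eq_mul, mul_comm]

/-- In a setwise-fixed perfect matching, the edge through a fixed point is
pointwise fixed. -/
private lemma fixed_edge_fixed {n : ℕ} {M : Finset (Finset (Fin n))}
    {g : Equiv.Perm (Fin n)} (hM : IsPerfectMatchingOn n M)
    (hMfix : M.image (Finset.image g) = M) {x : Fin n} {e : Finset (Fin n)}
    (he : e ∈ M) (hxe : x ∈ e) (hx : g x = x) : ∀ y ∈ e, g y = y := by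
  have hge : e.image g ∈ M := by
    rw [← hMfix]; exact Finset.mem_image_of_mem _ he
  have hximg : x ∈ e.image g := Finset.mem_image.mpr ⟨x, hxe, hx⟩
  have hge' : e.image g = e := pm_edge_unique hM hge he hximg hxe
  intro y hy
  by_cases hxy : y = x
  · rw [hxy]; exact hx
  have hxy' : x ≠ y := fun h => hxy h.symm
  have hsub : ({x, y} : Finset (Fin n)) ⊆ e :=
    Finset.insert_subset hxe (Finset.singleton_subset_iff.mpr hy)
  have hexy : ({x, y} : Finset (Fin n)) = e :=
    Finset.eq_of_subset_of_card_le hsub (by rw [hM.1 e he, Finset.card_pair hxy'])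
  have hgy : g y ∈ e := by
    rw [← hge']; exact Finset.mem_image_of_mem g hy
  rw [← hexy, Finset.mem_insert, Finset.mem_singleton] at hgy
  rcases hgy with hgy | hgy
  · exact absurd (g.injective (by rw [hgy, hx])) hxy
  · exact hgy

private lemma two_mul_choose_two (n : ℕ) : 2 * n.choose 2 = n * (n - 1) := by
  cases n with
  | zero => simp
  | succ m =>
    rw [Nat.choose_two_right]
    have h : 2 ∣ (m + 1) * ((m + 1) - 1) := by
      simpa [mul_comm] using (Nat.even_mul_succ_self m).two_dvd
    rw [Nat.mul_div_cancel' h]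

/-- If `g` is a non-identity automorphism of an edge-parallelism of the
complete graph on `n` points (`n` even) fixing exactly `r > 0` points, then
`r ≤ n / 2` and `g` fixes setwise exactly `r - 1` of the parallel classes. -/
theorem one_factorisation_auto_with_fixed_points (n : ℕ) (hn : Even n)
    (P : Finset (Finset (Finset (Fin n)))) (hP : IsOneFactorisation n P)
    (g : Equiv.Perm (Fin n)) (hg : IsOneFactorisationAuto n P g) (hg1 : g ≠ 1)
    (r : ℕ) (hr : (Finset.univ.filter fun x => g x = x).card = r) (hr0 : 0 < r) :
    2 * r ≤ n ∧
      (P.filter fun M => M.image (Finset.image g) = M).card = r - 1 := by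
  classical
  set F := Finset.univ.filter (fun x : Fin n => g x = x) with hF
  set Fix := P.filter (fun M => M.image (Finset.image g) = M) with hFixdef
  have hmemF : ∀ x : Fin n, x ∈ F ↔ g x = x := by
    intro x; simp [hF]
  -- n ≥ 2
  have hFne : F.Nonempty := Finset.card_pos.mp (by rw [hr]; exact hr0)
  have hn2 : 2 ≤ n := by
    obtain ⟨x, -⟩ := hFne
    have := x.pos
    rcases hn with ⟨k, hk⟩
    omega
  -- uniqueness of the class through a given edge
  have class_unique : ∀ {e : Finset (Fin n)} {M M' : Finset (Finset (Fin n))},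
      e.card = 2 → M ∈ P → M' ∈ P → e ∈ M → e ∈ M' → M = M' := by
    intro e M M' he hM hM' h1 h2
    exact (hP.2 e he).unique ⟨hM, h1⟩ ⟨hM', h2⟩
  -- disjointness of classes as edge sets
  have hPdisj : ∀ M ∈ P, ∀ M' ∈ P, M ≠ M' → Disjoint M M' := by
    intro M hM M' hM' hne
    rw [Finset.disjoint_left]
    intro e heM heM'
    exact hne (class_unique ((hP.1 M hM).1 e heM) hM hM' heM heM')
  -- the number of parallel classes, multiplied by n
  have hPcard : P.card * n = n * (n - 1) := by
    have hE : (Finset.powersetCard 2 (Finset.univ : Finset (Fin n))) = P.biUnion (fun M => M) := by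
      ext e
      simp only [Finset.mem_powersetCard_univ, Finset.mem_biUnion]
      constructor
      · intro he
        obtain ⟨M, ⟨hMP, heM⟩, -⟩ := hP.2 e he
        exact ⟨M, hMP, heM⟩
      · rintro ⟨M, hMP, heM⟩
        exact (hP.1 M hMP).1 e heM
    have hcnt : n.choose 2 = ∑ M ∈ P, M.card := by
      have h1 := Finset.card_powersetCard 2 (Finset.univ : Finset (Fin n))
      rw [hE, Finset.card_biUnion (fun M hM M' hM' hne => hPdisj M hM M' hM' hne)] at h1
      rw [Finset.card_univ, Fintype.card_fin] at h1
      exact h1.symm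
    have hMn : ∀ M ∈ P, M.card * 2 = n := by
      intro M hM
      have h2 := pm_card (hP.1 M hM) Finset.univ (fun x _ => by
        obtain ⟨e, ⟨heM, hxe⟩, -⟩ := (hP.1 M hM).2 x
        exact ⟨e, heM, hxe, Finset.subset_univ e⟩)
      rw [Finset.filter_true_of_mem (fun e _ => Finset.subset_univ e)] at h2
      simpa [mul_comm] using h2
    calc P.card * n = ∑ M ∈ P, n := by rw [Finset.sum_const, smul_eq_mul]
      _ = ∑ M ∈ P, M.card * 2 := Finset.sum_congr rfl (fun M hM => (hMn M hM).symm)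
      _ = 2 * ∑ M ∈ P, M.card := by rw [← Finset.sum_mul, mul_comm]
      _ = 2 * n.choose 2 := by rw [hcnt]
      _ = n * (n - 1) := two_mul_choose_two n
  -- the number of fixed classes, multiplied by r
  have hFixcard : Fix.card * r = r * (r - 1) := by
    have hEF : Finset.powersetCard 2 F = Fix.biUnion (fun M => M.filter (fun e => e ⊆ F)) := by
      ext e
      simp only [Finset.mem_powersetCard, Finset.mem_biUnion, Finset.mem_filter, hFixdef]
      constructor
      · rintro ⟨heF, he2⟩
        obtain ⟨M, ⟨hMP, heM⟩, -⟩ := hP.2 e he2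
        have hgee : e.image g = e := by
          rw [Finset.image_congr (fun x hx => (hmemF x).mp (heF hx)), Finset.image_id']
        have hMfix : M.image (Finset.image g) = M := by
          have h1 : e ∈ M.image (Finset.image g) := by
            rw [← hgee]; exact Finset.mem_image_of_mem _ heM
          exact class_unique he2 (hg M hMP) hMP h1 heM
        exact ⟨M, ⟨hMP, hMfix⟩, heM, heF⟩
      · rintro ⟨M, ⟨hMP, -⟩, heM, heF⟩
        exact ⟨heF, (hP.1 M hMP).1 e heM⟩
    have hdisj : ∀ M ∈ Fix, ∀ M' ∈ Fix, M ≠ M' →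
        Disjoint (M.filter (fun e => e ⊆ F)) (M'.filter (fun e => e ⊆ F)) := by
      intro M hM M' hM' hne
      exact Finset.disjoint_filter_filter
        (hPdisj M (Finset.mem_filter.mp hM).1 M' (Finset.mem_filter.mp hM').1 hne)
    have hcnt : r.choose 2 = ∑ M ∈ Fix, (M.filter (fun e => e ⊆ F)).card := by
      have h1 := Finset.card_powersetCard 2 F
      rw [hEF, Finset.card_biUnion hdisj, hr] at h1
      exact h1.symm
    have hMr : ∀ M ∈ Fix, (M.filter (fun e => e ⊆ F)).card * 2 = r := by
      intro M hM
      obtain ⟨hMP, hMfix⟩ := Finset.mem_filter.mp hM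
      have h2 := pm_card (hP.1 M hMP) F (fun x hx => by
        obtain ⟨e, ⟨heM, hxe⟩, -⟩ := (hP.1 M hMP).2 x
        refine ⟨e, heM, hxe, fun y hy => (hmemF y).mpr ?_⟩
        exact fixed_edge_fixed (hP.1 M hMP) hMfix heM hxe ((hmemF x).mp hx) y hy)
      rw [hr] at h2
      omega
    calc Fix.card * r = ∑ M ∈ Fix, r := by rw [Finset.sum_const, smul_eq_mul]
      _ = ∑ M ∈ Fix, (M.filter (fun e => e ⊆ F)).card * 2 :=
          Finset.sum_congr rfl (fun M hM => (hMr M hM).symm)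
      _ = 2 * ∑ M ∈ Fix, (M.filter (fun e => e ⊆ F)).card := by rw [← Finset.sum_mul, mul_comm]
      _ = 2 * r.choose 2 := by rw [hcnt]
      _ = r * (r - 1) := two_mul_choose_two r
  have hFixr : Fix.card = r - 1 := Nat.eq_of_mul_eq_mul_right hr0 (hFixcard.trans (mul_comm _ _))
  refine ⟨?_, hFixr⟩
  -- a point moved by g
  obtain ⟨z, hz⟩ : ∃ z : Fin n, g z ≠ z := by
    by_contra h
    push_neg at h
    exact hg1 (Equiv.ext fun x => h x)
  -- the injection from fixed points to non-fixed classes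
  have hinj : F.card ≤ (P \ Fix).card := by
    apply Finset.card_le_card_of_injOn
      (fun x => if hx : ({x, z} : Finset (Fin n)).card = 2 then (hP.2 _ hx).choose else ∅)
    · intro x hxF
      have hgx : g x = x := (hmemF x).mp hxF
      have hxz : x ≠ z := fun h => hz (h ▸ hgx)
      have hc : ({x, z} : Finset (Fin n)).card = 2 := Finset.card_pair hxz
      beta_reduce
      rw [Finset.mem_coe, dif_pos hc]
      obtain ⟨hMP, heM⟩ := (hP.2 _ hc).choose_spec.1
      set M := (hP.2 ({x, z} : Finset (Fin n)) hc).choose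
      rw [Finset.mem_sdiff]
      refine ⟨hMP, fun hMFix => ?_⟩
      have hMfix : M.image (Finset.image g) = M := (Finset.mem_filter.mp hMFix).2
      have h1 : ({x, g z} : Finset (Fin n)) ∈ M := by
        have h2 : ({x, z} : Finset (Fin n)).image g ∈ M := by
          rw [← hMfix]; exact Finset.mem_image_of_mem _ heM
        have h3 : ({x, z} : Finset (Fin n)).image g = {x, g z} := by
          rw [Finset.image_insert, Finset.image_singleton, hgx]
        rwa [h3] at h2
      have h4 : ({x, z} : Finset (Fin n)) = {x, g z} :=
        pm_edge_unique (hP.1 M hMP) heM h1 (Finset.mem_insert_self x _)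
          (Finset.mem_insert_self x _)
      have h5 : g z ∈ ({x, z} : Finset (Fin n)) := by
        rw [h4]; exact Finset.mem_insert_of_mem (Finset.mem_singleton_self _)
      rw [Finset.mem_insert, Finset.mem_singleton] at h5
      rcases h5 with h5 | h5
      · exact hxz (g.injective (by rw [h5, hgx])).symm
      · exact hz h5
    · intro x hxF x' hxF' heq
      have hgx : g x = x := (hmemF x).mp hxF
      have hgx' : g x' = x' := (hmemF x').mp hxF'
      have hxz : x ≠ z := fun h => hz (h ▸ hgx)
      have hxz' : x' ≠ z := fun h => hz (h ▸ hgx')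
      have hc : ({x, z} : Finset (Fin n)).card = 2 := Finset.card_pair hxz
      have hc' : ({x', z} : Finset (Fin n)).card = 2 := Finset.card_pair hxz'
      simp only [dif_pos hc, dif_pos hc'] at heq
      obtain ⟨hMP, heM⟩ := (hP.2 _ hc).choose_spec.1
      obtain ⟨hMP', heM'⟩ := (hP.2 _ hc').choose_spec.1
      rw [← heq] at heM'
      have h4 : ({x, z} : Finset (Fin n)) = {x', z} :=
        pm_edge_unique (hP.1 _ hMP) heM heM'
          (Finset.mem_insert_of_mem (Finset.mem_singleton_self _))
          (Finset.mem_insert_of_mem (Finset.mem_singleton_self _))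
      have h5 : x ∈ ({x', z} : Finset (Fin n)) := by
        rw [← h4]; exact Finset.mem_insert_self _ _
      rw [Finset.mem_insert, Finset.mem_singleton] at h5
      rcases h5 with h5 | h5
      · exact h5
      · exact absurd h5 hxz
  have hPn : P.card = n - 1 := by
    have : P.card * n = (n - 1) * n := by rw [hPcard, mul_comm]
    exact Nat.eq_of_mul_eq_mul_right (by omega) this
  have hsub : Fix ⊆ P := Finset.filter_subset _ _
  have hsd : (P \ Fix).card = P.card - Fix.card := Finset.card_sdiff_of_subset hsub
  rw [hr] at hinj
  have hFixle : Fix.card ≤ P.card := Finset.card_le_card hsub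
  omega
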